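/- arXiv:2004.11796 — 3 statements merged into one kernel-verified Lean document; each statement's English description precedes it below -/
import Mathlib

section
/- Let Ψ be a Max-2OR instance with m_1 1-clauses and m_2 2-clauses. Then val_Ψ ≤ min{ m_1 + m_2, (m_1 + 2m_2 + bias(Ψ))/2 }. (Lemma 3.9.) -/
/-- A `Max-2OR` clause: either a 1-clause (a single literal) or a 2-clause
(disjunction of two literals on distinct variables). A literal on variable `i`
with polarity `b` (`b = true` for `xᵢ`, `b = false` for `¬xᵢ`) evaluates to `σ i == b`. -/
inductive OrClause (n : ℕ) where
  | one (i : Fin n) (b : Bool)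
  | two (i : Fin n) (bi : Bool) (j : Fin n) (bj : Bool) (hij : i ≠ j)

/-- Evaluation of a clause under an assignment. -/
def OrClause.eval {n : ℕ} (σ : Fin n → Bool) : OrClause n → Bool
  | .one i b => σ i == b
  | .two i bi j bj _ => (σ i == bi) || (σ j == bj)

/-- Whether a clause is a 1-clause. -/
def OrClause.isOne {n : ℕ} : OrClause n → Bool
  | .one _ _ => true
  | .two _ _ _ _ _ => false

/-- `m₁`: the number of 1-clauses. -/
def numOne {n : ℕ} (Ψ : List (OrClause n)) : ℕ := Ψ.countP OrClause.isOne

/-- `m₂`: the number of 2-clauses. -/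
def numTwo {n : ℕ} (Ψ : List (OrClause n)) : ℕ := Ψ.countP (fun C => !C.isOne)

/-- The number of clauses of `Ψ` satisfied by `σ`, i.e. `val_Ψ(σ)`. -/
def satCount {n : ℕ} (Ψ : List (OrClause n)) (σ : Fin n → Bool) : ℕ :=
  Ψ.countP (fun C => C.eval σ)

/-- `val_Ψ`: the maximum number of simultaneously satisfiable clauses. -/
def maxVal {n : ℕ} (Ψ : List (OrClause n)) : ℕ :=
  Finset.univ.sup (fun σ : Fin n → Bool => satCount Ψ σ)

/-- `pos_i^{(1)}(Ψ)`: the number of 1-clauses containing the literal `xᵢ`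
(`negᵢ^{(1)}` for `¬xᵢ`, according to polarity `b`). -/
def cnt1 {n : ℕ} (Ψ : List (OrClause n)) (v : Fin n) (b : Bool) : ℕ :=
  (Ψ.map (fun C => match C with
    | .one i b' => if i = v ∧ b' = b then 1 else 0
    | .two _ _ _ _ _ => 0)).sum

/-- `pos_i^{(2)}(Ψ)`: the number of 2-clauses containing the literal `xᵢ`
(`negᵢ^{(2)}` for `¬xᵢ`, according to polarity `b`). -/
def cnt2 {n : ℕ} (Ψ : List (OrClause n)) (v : Fin n) (b : Bool) : ℕ :=
  (Ψ.map (fun C => match C with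
    | .one _ _ => 0
    | .two i bi j bj _ => (if i = v ∧ bi = b then 1 else 0)
                        + (if j = v ∧ bj = b then 1 else 0))).sum

/-- `bias(Ψ) = (1/2) Σᵢ |2 posᵢ⁽¹⁾ + posᵢ⁽²⁾ − 2 negᵢ⁽¹⁾ − negᵢ⁽²⁾|`. -/
noncomputable def bias {n : ℕ} (Ψ : List (OrClause n)) : ℝ :=
  (1/2) * ∑ v : Fin n,
    |2 * (cnt1 Ψ v true : ℝ) + (cnt2 Ψ v true : ℝ)
      - 2 * (cnt1 Ψ v false : ℝ) - (cnt2 Ψ v false : ℝ)|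

def clauseCnt1 {n : ℕ} (C : OrClause n) (v : Fin n) (b : Bool) : ℕ :=
  match C with
  | .one i b' => if i = v ∧ b' = b then 1 else 0
  | .two _ _ _ _ _ => 0

def clauseCnt2 {n : ℕ} (C : OrClause n) (v : Fin n) (b : Bool) : ℕ :=
  match C with
  | .one _ _ => 0
  | .two i bi j bj _ => (if i = v ∧ bi = b then 1 else 0)
                      + (if j = v ∧ bj = b then 1 else 0)

lemma cnt1_cons {n : ℕ} (C : OrClause n) (Ψ : List (OrClause n)) (v : Fin n) (b : Bool) :
    cnt1 (C :: Ψ) v b = clauseCnt1 C v b + cnt1 Ψ v b := by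
  cases C <;> rfl

lemma cnt2_cons {n : ℕ} (C : OrClause n) (Ψ : List (OrClause n)) (v : Fin n) (b : Bool) :
    cnt2 (C :: Ψ) v b = clauseCnt2 C v b + cnt2 Ψ v b := by
  cases C <;> rfl

lemma key_nat {n : ℕ} (Ψ : List (OrClause n)) (σ : Fin n → Bool) :
    2 * satCount Ψ σ ≤
      numTwo Ψ + ∑ v : Fin n, (2 * cnt1 Ψ v (σ v) + cnt2 Ψ v (σ v)) := by
  induction Ψ with
  | nil => simp [satCount, numTwo, cnt1, cnt2]
  | cons C Ψ ih =>
    have hsat : satCount (C :: Ψ) σ = satCount Ψ σ + (if C.eval σ then 1 else 0) := by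
      simp [satCount, List.countP_cons]
    have hnum : numTwo (C :: Ψ) = numTwo Ψ + (if C.isOne then 0 else 1) := by
      cases C <;> simp [numTwo, List.countP_cons, OrClause.isOne]
    have hC : 2 * (if C.eval σ then 1 else 0) ≤ (if C.isOne then 0 else 1) +
        ∑ v : Fin n, (2 * clauseCnt1 C v (σ v) + clauseCnt2 C v (σ v)) := by
      cases C with
      | one i b =>
        have hs : (∑ v : Fin n, (2 * clauseCnt1 (OrClause.one i b) v (σ v)
            + clauseCnt2 (OrClause.one i b) v (σ v)))
            = 2 * (if b = σ i then 1 else 0) := by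
          simp [clauseCnt1, clauseCnt2, ite_and, ← Finset.mul_sum]
        rw [hs]
        cases hb : σ i <;> cases b <;> simp_all [OrClause.eval, OrClause.isOne]
      | two i bi j bj hij =>
        have hs : (∑ v : Fin n, (2 * clauseCnt1 (OrClause.two i bi j bj hij) v (σ v)
            + clauseCnt2 (OrClause.two i bi j bj hij) v (σ v)))
            = (if bi = σ i then 1 else 0) + (if bj = σ j then 1 else 0) := by
          simp [clauseCnt1, clauseCnt2, ite_and, Finset.sum_add_distrib]
        rw [hs]
        cases hbi : σ i <;> cases hbj : σ j <;> cases bi <;> cases bj <;>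
          simp_all [OrClause.eval, OrClause.isOne]
    calc 2 * satCount (C :: Ψ) σ
        = 2 * (if C.eval σ then 1 else 0) + 2 * satCount Ψ σ := by rw [hsat]; ring
      _ ≤ ((if C.isOne then 0 else 1)
            + ∑ v : Fin n, (2 * clauseCnt1 C v (σ v) + clauseCnt2 C v (σ v)))
          + (numTwo Ψ + ∑ v : Fin n, (2 * cnt1 Ψ v (σ v) + cnt2 Ψ v (σ v))) :=
        Nat.add_le_add hC ih
      _ = numTwo (C :: Ψ) + ∑ v : Fin n, (2 * cnt1 (C :: Ψ) v (σ v) + cnt2 (C :: Ψ) v (σ v)) := by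
        simp only [hnum, cnt1_cons, cnt2_cons, mul_add, Finset.sum_add_distrib]
        ring

lemma total_nat {n : ℕ} (Ψ : List (OrClause n)) :
    ∑ v : Fin n, (2 * cnt1 Ψ v true + cnt2 Ψ v true
      + (2 * cnt1 Ψ v false + cnt2 Ψ v false)) = 2 * Ψ.length := by
  induction Ψ with
  | nil => simp [cnt1, cnt2]
  | cons C Ψ ih =>
    have hC : (∑ v : Fin n, (2 * clauseCnt1 C v true + clauseCnt2 C v true
        + (2 * clauseCnt1 C v false + clauseCnt2 C v false))) = 2 := by
      cases C with
      | one i b =>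
        cases b <;>
          simp [clauseCnt1, clauseCnt2, ite_and, Finset.sum_add_distrib, ← Finset.mul_sum]
      | two i bi j bj hij =>
        cases bi <;> cases bj <;>
          simp [clauseCnt1, clauseCnt2, ite_and, Finset.sum_add_distrib]
    calc ∑ v : Fin n, (2 * cnt1 (C :: Ψ) v true + cnt2 (C :: Ψ) v true
          + (2 * cnt1 (C :: Ψ) v false + cnt2 (C :: Ψ) v false))
        = (∑ v : Fin n, (2 * clauseCnt1 C v true + clauseCnt2 C v true
            + (2 * clauseCnt1 C v false + clauseCnt2 C v false)))
          + ∑ v : Fin n, (2 * cnt1 Ψ v true + cnt2 Ψ v true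
            + (2 * cnt1 Ψ v false + cnt2 Ψ v false)) := by
          simp only [cnt1_cons, cnt2_cons, mul_add, Finset.sum_add_distrib]; ring
      _ = 2 + 2 * Ψ.length := by rw [hC, ih]
      _ = 2 * (C :: Ψ).length := by simp [List.length_cons]; ring

lemma sat_le_real {n : ℕ} (Ψ : List (OrClause n)) (σ : Fin n → Bool) :
    (satCount Ψ σ : ℝ) ≤ ((numOne Ψ : ℝ) + 2 * (numTwo Ψ : ℝ) + bias Ψ) / 2 := by
  have hkey : (2 * satCount Ψ σ : ℝ) ≤
      (numTwo Ψ : ℝ) + ∑ v : Fin n, ((2 * cnt1 Ψ v (σ v) + cnt2 Ψ v (σ v) : ℕ) : ℝ) := by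
    have := key_nat Ψ σ
    have := (Nat.cast_le (α := ℝ)).mpr this
    push_cast at this ⊢
    convert this using 2
  have hlen : numOne Ψ + numTwo Ψ = Ψ.length := by
    simp [numOne, numTwo, List.length_eq_countP_add_countP OrClause.isOne]
  have htot : (∑ v : Fin n, ((2 * (cnt1 Ψ v true : ℝ) + (cnt2 Ψ v true : ℝ))
      + (2 * (cnt1 Ψ v false : ℝ) + (cnt2 Ψ v false : ℝ))))
      = 2 * (numOne Ψ : ℝ) + 2 * (numTwo Ψ : ℝ) := by
    have := total_nat Ψ
    have hc := congrArg (fun k : ℕ => (k : ℝ)) this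
    push_cast at hc
    rw [hc, ← hlen]
    push_cast
    ring
  have hterm : ∀ v : Fin n, ((2 * cnt1 Ψ v (σ v) + cnt2 Ψ v (σ v) : ℕ) : ℝ) ≤
      ((2 * (cnt1 Ψ v true : ℝ) + (cnt2 Ψ v true : ℝ))
        + (2 * (cnt1 Ψ v false : ℝ) + (cnt2 Ψ v false : ℝ))) / 2
      + |2 * (cnt1 Ψ v true : ℝ) + (cnt2 Ψ v true : ℝ)
          - 2 * (cnt1 Ψ v false : ℝ) - (cnt2 Ψ v false : ℝ)| / 2 := by
    intro v
    have habs1 := le_abs_self (2 * (cnt1 Ψ v true : ℝ) + (cnt2 Ψ v true : ℝ)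
      - 2 * (cnt1 Ψ v false : ℝ) - (cnt2 Ψ v false : ℝ))
    have habs2 := neg_abs_le (2 * (cnt1 Ψ v true : ℝ) + (cnt2 Ψ v true : ℝ)
      - 2 * (cnt1 Ψ v false : ℝ) - (cnt2 Ψ v false : ℝ))
    cases h : σ v <;> push_cast <;> linarith
  have hsum : (∑ v : Fin n, ((2 * cnt1 Ψ v (σ v) + cnt2 Ψ v (σ v) : ℕ) : ℝ)) ≤
      (numOne Ψ : ℝ) + (numTwo Ψ : ℝ) + bias Ψ := by
    calc (∑ v : Fin n, ((2 * cnt1 Ψ v (σ v) + cnt2 Ψ v (σ v) : ℕ) : ℝ))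
        ≤ ∑ v : Fin n, (((2 * (cnt1 Ψ v true : ℝ) + (cnt2 Ψ v true : ℝ))
            + (2 * (cnt1 Ψ v false : ℝ) + (cnt2 Ψ v false : ℝ))) / 2
          + |2 * (cnt1 Ψ v true : ℝ) + (cnt2 Ψ v true : ℝ)
              - 2 * (cnt1 Ψ v false : ℝ) - (cnt2 Ψ v false : ℝ)| / 2) :=
        Finset.sum_le_sum fun v _ => hterm v
      _ = (∑ v : Fin n, ((2 * (cnt1 Ψ v true : ℝ) + (cnt2 Ψ v true : ℝ))
            + (2 * (cnt1 Ψ v false : ℝ) + (cnt2 Ψ v false : ℝ)))) / 2 + bias Ψ := by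
          rw [Finset.sum_add_distrib, ← Finset.sum_div, bias, Finset.mul_sum]
          congr 1
          exact Finset.sum_congr rfl fun v _ => by ring
      _ = (numOne Ψ : ℝ) + (numTwo Ψ : ℝ) + bias Ψ := by rw [htot]; ring
  linarith

/-- Lemma 3.9: `val_Ψ ≤ min{ m₁ + m₂, (m₁ + 2m₂ + bias(Ψ))/2 }`. -/
theorem or_upper_bound {n : ℕ} (Ψ : List (OrClause n)) :
    (maxVal Ψ : ℝ) ≤
      min ((numOne Ψ : ℝ) + (numTwo Ψ : ℝ))
        (((numOne Ψ : ℝ) + 2 * (numTwo Ψ : ℝ) + bias Ψ) / 2) := by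
  obtain ⟨σ, -, hσ⟩ := Finset.exists_mem_eq_sup (Finset.univ : Finset (Fin n → Bool))
    Finset.univ_nonempty (fun σ => satCount Ψ σ)
  rw [maxVal, hσ]
  have hlen : numOne Ψ + numTwo Ψ = Ψ.length := by
    simp [numOne, numTwo, List.length_eq_countP_add_countP OrClause.isOne]
  refine le_min ?_ (sat_le_real Ψ σ)
  have h1 : satCount Ψ σ ≤ Ψ.length := List.countP_le_length (p := fun C : OrClause n => C.eval σ)
  rw [← hlen] at h1
  exact_mod_cast h1
end

section
/- Let Ψ be a Max-2OR instance with m_1 1-clauses and m_2 > 0 2-clauses, and suppose bias(Ψ) ≤ m_2. Then val_Ψ ≥ m_1/2 + 3m_2/4 + bias(Ψ)²/(4m_2). (Lemma 3.10, part 2.) -/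
section Aux

variable {n : ℕ}

/-- The (real) discrepancy `D_v = 2 pos⁽¹⁾ + pos⁽²⁾ − 2 neg⁽¹⁾ − neg⁽²⁾`. -/
noncomputable def Dv (Ψ : List (OrClause n)) (v : Fin n) : ℝ :=
  2 * (cnt1 Ψ v true : ℝ) + (cnt2 Ψ v true : ℝ)
    - 2 * (cnt1 Ψ v false : ℝ) - (cnt2 Ψ v false : ℝ)

/-- The sign of the discrepancy. -/
noncomputable def sv (Ψ : List (OrClause n)) (v : Fin n) : ℝ :=
  if 0 ≤ Dv Ψ v then 1 else -1

/-- ±1 encoding of a Boolean. -/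
def eB : Bool → ℝ := fun b => if b then 1 else -1

lemma eB_sq (b : Bool) : eB b ^ 2 = 1 := by cases b <;> simp [eB]

lemma sv_sq (Ψ : List (OrClause n)) (v : Fin n) : sv Ψ v ^ 2 = 1 := by
  unfold sv; split <;> ring

lemma sv_mul_D (Ψ : List (OrClause n)) (v : Fin n) :
    sv Ψ v * Dv Ψ v = |Dv Ψ v| := by
  unfold sv; split
  · rw [abs_of_nonneg ‹_›]; ring
  · rw [abs_of_neg (lt_of_not_ge ‹_›)]; ring

lemma bias_eq (Ψ : List (OrClause n)) : bias Ψ = (1/2) * ∑ v, |Dv Ψ v| := rfl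

lemma bias_nonneg (Ψ : List (OrClause n)) : 0 ≤ bias Ψ := by
  rw [bias_eq]; positivity

/-- Biased probability of setting variable `v` to `b`. -/
noncomputable def pw (Ψ : List (OrClause n)) (ε : ℝ) (v : Fin n) (b : Bool) : ℝ :=
  1/2 + ε * eB b * sv Ψ v

lemma pw_sum (Ψ : List (OrClause n)) (ε : ℝ) (v : Fin n) :
    pw Ψ ε v true + pw Ψ ε v false = 1 := by
  simp [pw, eB]; ring

lemma pw_nonneg (Ψ : List (OrClause n)) {ε : ℝ} (hε : |ε| ≤ 1/2) (v : Fin n) (b : Bool) :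
    0 ≤ pw Ψ ε v b := by
  have h1 : eB b * sv Ψ v = 1 ∨ eB b * sv Ψ v = -1 := by
    unfold eB sv
    rcases le_or_gt 0 (Dv Ψ v) with h | h <;> cases b
    · simp [h]
    · simp [h]
    · simp [not_le.mpr h]
    · simp [not_le.mpr h]
  have h2 := abs_le.mp hε
  unfold pw
  rw [mul_assoc]
  rcases h1 with h | h <;> rw [h] <;> linarith

/-- Product weight of an assignment. -/
noncomputable def μw (Ψ : List (OrClause n)) (ε : ℝ) (σ : Fin n → Bool) : ℝ :=
  ∏ v, pw Ψ ε v (σ v)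

lemma μw_nonneg (Ψ : List (OrClause n)) {ε : ℝ} (hε : |ε| ≤ 1/2) (σ : Fin n → Bool) :
    0 ≤ μw Ψ ε σ :=
  Finset.prod_nonneg fun v _ => pw_nonneg Ψ hε v (σ v)

lemma prod_marginal (g : Fin n → Bool → ℝ) :
    ∑ σ : Fin n → Bool, ∏ v, g v (σ v) = ∏ v, (g v true + g v false) := by
  have h := Finset.prod_univ_sum (fun _ : Fin n => (Finset.univ : Finset Bool)) g
  rw [Fintype.piFinset_univ] at h
  rw [← h]
  exact Finset.prod_congr rfl fun v _ => by rw [Fintype.sum_bool]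

lemma sum_μw (Ψ : List (OrClause n)) (ε : ℝ) :
    ∑ σ : Fin n → Bool, μw Ψ ε σ = 1 := by
  unfold μw
  rw [prod_marginal]
  simp [pw_sum]

lemma sum_μw_ind1 (Ψ : List (OrClause n)) (ε : ℝ) (i : Fin n) (a : Bool) :
    ∑ σ : Fin n → Bool, μw Ψ ε σ * (if σ i = a then 1 else 0) = pw Ψ ε i a := by
  have key : ∀ σ : Fin n → Bool, μw Ψ ε σ * (if σ i = a then 1 else 0)
      = ∏ v, (pw Ψ ε v (σ v) * (if v = i then (if σ v = a then 1 else 0) else 1)) := by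
    intro σ
    rw [Finset.prod_mul_distrib]
    unfold μw
    congr 1
    rw [Finset.prod_eq_single i (fun v _ hv => by simp [hv]) (by simp)]
    simp
  rw [Finset.sum_congr rfl fun σ _ => key σ]
  refine Eq.trans (prod_marginal fun v b =>
    pw Ψ ε v b * (if v = i then (if b = a then 1 else 0) else 1)) ?_
  rw [Finset.prod_eq_single i (fun v _ hv => by simp [hv, pw_sum]) (by simp)]
  cases a <;> simp

lemma sum_μw_ind2 (Ψ : List (OrClause n)) (ε : ℝ) {i j : Fin n} (hij : i ≠ j) (a c : Bool) :
    ∑ σ : Fin n → Bool, μw Ψ ε σ * ((if σ i = a then 1 else 0) * (if σ j = c then 1 else 0))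
      = pw Ψ ε i a * pw Ψ ε j c := by
  have hsub : ({i, j} : Finset (Fin n)) ⊆ Finset.univ := Finset.subset_univ _
  have key : ∀ σ : Fin n → Bool,
      μw Ψ ε σ * ((if σ i = a then 1 else 0) * (if σ j = c then 1 else 0))
      = ∏ v, (pw Ψ ε v (σ v) *
          (if v = i then (if σ v = a then 1 else 0)
           else if v = j then (if σ v = c then 1 else 0) else 1)) := by
    intro σ
    rw [Finset.prod_mul_distrib]
    unfold μw
    congr 1
    rw [← Finset.prod_subset hsub (fun v _ hv => by
      have h1 : v ≠ i := fun h => hv (by simp [h])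
      have h2 : v ≠ j := fun h => hv (by simp [h])
      simp [h1, h2])]
    rw [Finset.prod_pair hij]
    simp [hij, Ne.symm hij]
  rw [Finset.sum_congr rfl fun σ _ => key σ]
  refine Eq.trans (prod_marginal fun v b =>
    pw Ψ ε v b * (if v = i then (if b = a then 1 else 0)
      else if v = j then (if b = c then 1 else 0) else 1)) ?_
  rw [← Finset.prod_subset hsub (fun v _ hv => by
    have h1 : v ≠ i := fun h => hv (by simp [h])
    have h2 : v ≠ j := fun h => hv (by simp [h])
    simp [h1, h2, pw_sum])]
  rw [Finset.prod_pair hij]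
  simp only [if_pos rfl, if_neg hij, if_neg (Ne.symm hij)]
  cases a <;> cases c <;> simp

/-- The marginal probability (weighted count) that a clause is satisfied. -/
noncomputable def margin (Ψ : List (OrClause n)) (ε : ℝ) (C : OrClause n) : ℝ :=
  ∑ σ : Fin n → Bool, μw Ψ ε σ * (if C.eval σ then 1 else 0)

lemma margin_one (Ψ : List (OrClause n)) (ε : ℝ) (i : Fin n) (b : Bool) :
    margin Ψ ε (.one i b) = pw Ψ ε i b := by
  unfold margin
  rw [← sum_μw_ind1 Ψ ε i b]
  exact Finset.sum_congr rfl fun σ _ => by simp [OrClause.eval]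

lemma ind_or (x y bi bj : Bool) :
    (if (x == bi || y == bj) = true then (1:ℝ) else 0)
      = 1 - (if x = !bi then 1 else 0) * (if y = !bj then 1 else 0) := by
  cases x <;> cases y <;> cases bi <;> cases bj <;> norm_num

lemma margin_two (Ψ : List (OrClause n)) (ε : ℝ) {i j : Fin n} (bi bj : Bool) (hij : i ≠ j) :
    margin Ψ ε (.two i bi j bj hij) = 1 - pw Ψ ε i (!bi) * pw Ψ ε j (!bj) := by
  unfold margin
  have key : ∀ σ : Fin n → Bool,
      μw Ψ ε σ * (if (OrClause.two i bi j bj hij).eval σ then 1 else 0)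
      = μw Ψ ε σ - μw Ψ ε σ * ((if σ i = !bi then 1 else 0) * (if σ j = !bj then 1 else 0)) := by
    intro σ
    have h := ind_or (σ i) (σ j) bi bj
    have h' : (if (OrClause.two i bi j bj hij).eval σ then (1:ℝ) else 0) = _ := h
    rw [h']; ring
  rw [Finset.sum_congr rfl fun σ _ => key σ, Finset.sum_sub_distrib, sum_μw,
    sum_μw_ind2 Ψ ε hij]

end Aux
section Aux2

variable {n : ℕ}

lemma satCount_real (Ψ : List (OrClause n)) (σ : Fin n → Bool) :
    (satCount Ψ σ : ℝ) = (Ψ.map (fun C => if C.eval σ then (1:ℝ) else 0)).sum := by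
  induction Ψ with
  | nil => simp [satCount]
  | cons C L ih =>
    simp only [satCount, List.countP_cons, List.map_cons, List.sum_cons] at *
    push_cast
    rw [← ih]
    by_cases h : C.eval σ = true <;> simp [h, satCount] <;> ring

lemma sum_mul_listsum (w : (Fin n → Bool) → ℝ) (L : List (OrClause n))
    (g : (Fin n → Bool) → OrClause n → ℝ) :
    ∑ σ : Fin n → Bool, w σ * (L.map (g σ)).sum
      = (L.map (fun C => ∑ σ : Fin n → Bool, w σ * g σ C)).sum := by
  induction L with
  | nil => simp
  | cons C L ih => simp [mul_add, Finset.sum_add_distrib, ih]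

/-- Generic lower-bound weight for a clause, given a sign vector `s`. -/
noncomputable def lbG (ε : ℝ) (s : Fin n → ℝ) : OrClause n → ℝ
  | .one _i b => 1/2 + ε * eB b * s _i
  | .two i bi j bj _ => 3/4 - ε^2 + ε * (eB bi * s i + eB bj * s j) / 2

lemma sum_single (s : Fin n → ℝ) (i : Fin n) :
    ∑ v, (if i = v then s v else 0) = s i := by
  simp

lemma lbG_sum (ε : ℝ) (s : Fin n → ℝ) (L : List (OrClause n)) :
    (L.map (lbG ε s)).sum
    = (numOne L : ℝ)/2 + (3/4 - ε^2) * (numTwo L : ℝ)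
      + ε * ∑ v, s v * (((cnt1 L v true : ℝ) - (cnt1 L v false : ℝ))
          + ((cnt2 L v true : ℝ) - (cnt2 L v false : ℝ))/2) := by
  induction L with
  | nil => simp [numOne, numTwo, cnt1, cnt2]
  | cons C L ih =>
    rw [List.map_cons, List.sum_cons, ih]
    cases C with
    | one i b =>
      have h1 : ∀ b', (cnt1 (OrClause.one i b :: L) · b') =
          fun v => (if i = v ∧ b = b' then 1 else 0) + cnt1 L v b' := by
        intro b'; funext v; simp [cnt1]
      have h2 : ∀ b', (cnt2 (OrClause.one i b :: L) · b') = (cnt2 L · b') := by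
        intro b'; funext v; simp [cnt2]
      have hone : (numOne (OrClause.one i b :: L) : ℝ) = 1 + (numOne L : ℝ) := by
        simp [numOne, List.countP_cons, OrClause.isOne]; ring
      have htwo : numTwo (OrClause.one i b :: L) = numTwo L := by
        simp [numTwo, List.countP_cons, OrClause.isOne]
      have hsplit : ∑ v, s v * (((cnt1 (OrClause.one i b :: L) v true : ℝ)
              - (cnt1 (OrClause.one i b :: L) v false : ℝ))
            + ((cnt2 (OrClause.one i b :: L) v true : ℝ)
              - (cnt2 (OrClause.one i b :: L) v false : ℝ))/2)
          = (∑ v, s v * (((cnt1 L v true : ℝ) - (cnt1 L v false : ℝ))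
              + ((cnt2 L v true : ℝ) - (cnt2 L v false : ℝ))/2)) + eB b * s i := by
        have hpt : ∀ v, s v * (((cnt1 (OrClause.one i b :: L) v true : ℝ)
                - (cnt1 (OrClause.one i b :: L) v false : ℝ))
              + ((cnt2 (OrClause.one i b :: L) v true : ℝ)
                - (cnt2 (OrClause.one i b :: L) v false : ℝ))/2)
            = s v * (((cnt1 L v true : ℝ) - (cnt1 L v false : ℝ))
                + ((cnt2 L v true : ℝ) - (cnt2 L v false : ℝ))/2)
              + (if i = v then eB b * s v else 0) := by
          intro v
          rw [congrFun (h1 true) v, congrFun (h1 false) v,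
            congrFun (h2 true) v, congrFun (h2 false) v]
          push_cast
          cases b <;> simp [eB] <;> split <;> ring
        rw [Finset.sum_congr rfl fun v _ => hpt v, Finset.sum_add_distrib]
        congr 1
        rw [show (fun v => if i = v then eB b * s v else 0)
            = fun v => if i = v then (fun u => eB b * s u) v else 0 from rfl] at *
        rw [Finset.sum_ite_eq]
        simp
      rw [hone, htwo, hsplit]
      simp only [lbG]
      ring
    | two i bi j bj hij =>
      have h1 : ∀ b', (cnt1 (OrClause.two i bi j bj hij :: L) · b') = (cnt1 L · b') := by
        intro b'; funext v; simp [cnt1]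
      have h2 : ∀ b', (cnt2 (OrClause.two i bi j bj hij :: L) · b') =
          fun v => ((if i = v ∧ bi = b' then 1 else 0) + (if j = v ∧ bj = b' then 1 else 0))
            + cnt2 L v b' := by
        intro b'; funext v; simp [cnt2]
      have hone : numOne (OrClause.two i bi j bj hij :: L) = numOne L := by
        simp [numOne, List.countP_cons, OrClause.isOne]
      have htwo : (numTwo (OrClause.two i bi j bj hij :: L) : ℝ) = 1 + (numTwo L : ℝ) := by
        simp [numTwo, List.countP_cons, OrClause.isOne]; ring
      have hsplit : ∑ v, s v * (((cnt1 (OrClause.two i bi j bj hij :: L) v true : ℝ)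
              - (cnt1 (OrClause.two i bi j bj hij :: L) v false : ℝ))
            + ((cnt2 (OrClause.two i bi j bj hij :: L) v true : ℝ)
              - (cnt2 (OrClause.two i bi j bj hij :: L) v false : ℝ))/2)
          = (∑ v, s v * (((cnt1 L v true : ℝ) - (cnt1 L v false : ℝ))
              + ((cnt2 L v true : ℝ) - (cnt2 L v false : ℝ))/2))
            + (eB bi * s i + eB bj * s j) / 2 := by
        have hpt : ∀ v, s v * (((cnt1 (OrClause.two i bi j bj hij :: L) v true : ℝ)
                - (cnt1 (OrClause.two i bi j bj hij :: L) v false : ℝ))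
              + ((cnt2 (OrClause.two i bi j bj hij :: L) v true : ℝ)
                - (cnt2 (OrClause.two i bi j bj hij :: L) v false : ℝ))/2)
            = s v * (((cnt1 L v true : ℝ) - (cnt1 L v false : ℝ))
                + ((cnt2 L v true : ℝ) - (cnt2 L v false : ℝ))/2)
              + ((if i = v then eB bi * s v / 2 else 0)
                + (if j = v then eB bj * s v / 2 else 0)) := by
          intro v
          rw [congrFun (h1 true) v, congrFun (h1 false) v,
            congrFun (h2 true) v, congrFun (h2 false) v]
          push_cast
          cases bi <;> cases bj <;> simp [eB] <;> split <;> split <;> ring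
        rw [Finset.sum_congr rfl fun v _ => hpt v, Finset.sum_add_distrib,
          Finset.sum_add_distrib, Finset.sum_ite_eq, Finset.sum_ite_eq]
        simp
        ring
      rw [hone, htwo, hsplit]
      simp only [lbG]
      ring

lemma sv_sum_eq_bias (Ψ : List (OrClause n)) :
    ∑ v, sv Ψ v * (((cnt1 Ψ v true : ℝ) - (cnt1 Ψ v false : ℝ))
        + ((cnt2 Ψ v true : ℝ) - (cnt2 Ψ v false : ℝ))/2) = bias Ψ := by
  rw [bias_eq, Finset.mul_sum]
  refine Finset.sum_congr rfl fun v _ => ?_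
  rw [← sv_mul_D Ψ v]
  unfold Dv
  ring

end Aux2
section Main

variable {n : ℕ}

lemma eB_not (b : Bool) : eB (!b) = - eB b := by cases b <;> simp [eB]

lemma lb_le_margin (Ψ : List (OrClause n)) (ε : ℝ) (C : OrClause n) :
    lbG ε (sv Ψ) C ≤ margin Ψ ε C := by
  cases C with
  | one i b =>
    rw [margin_one]
    simp [lbG, pw]
  | two i bi j bj hij =>
    rw [margin_two Ψ ε bi bj hij]
    simp only [lbG, pw, eB_not]
    have ha : (eB bi * sv Ψ i)^2 = 1 := by
      rw [mul_pow, eB_sq, sv_sq, mul_one]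
    have hb : (eB bj * sv Ψ j)^2 = 1 := by
      rw [mul_pow, eB_sq, sv_sq, mul_one]
    have hab : eB bi * sv Ψ i * (eB bj * sv Ψ j) ≤ 1 := by
      nlinarith [sq_nonneg (eB bi * sv Ψ i - eB bj * sv Ψ j)]
    nlinarith [mul_le_mul_of_nonneg_left hab (sq_nonneg ε)]

end Main

theorem or_bias_lower_bound_two_aux {n : ℕ} (Ψ : List (OrClause n))
    (hm2 : 0 < numTwo Ψ) (hb : bias Ψ ≤ (numTwo Ψ : ℝ)) :
    (numOne Ψ : ℝ) / 2 + 3 * (numTwo Ψ : ℝ) / 4 + (bias Ψ) ^ 2 / (4 * (numTwo Ψ : ℝ))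
      ≤ (maxVal Ψ : ℝ) := by
  have hm2R : (0:ℝ) < (numTwo Ψ : ℝ) := by exact_mod_cast hm2
  have hβ0 : 0 ≤ bias Ψ := bias_nonneg Ψ
  set ε := bias Ψ / (2 * (numTwo Ψ : ℝ)) with hεdef
  have hε0 : 0 ≤ ε := by positivity
  have hεhalf : ε ≤ 1/2 := by
    rw [hεdef, div_le_iff₀ (by linarith)]
    linarith
  have hεabs : |ε| ≤ 1/2 := by rwa [abs_of_nonneg hε0]
  have hmax : ∀ σ : Fin n → Bool, (satCount Ψ σ : ℝ) ≤ (maxVal Ψ : ℝ) := by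
    intro σ
    have := Finset.le_sup (f := fun σ : Fin n → Bool => satCount Ψ σ) (Finset.mem_univ σ)
    exact_mod_cast this
  have hE2 : ∑ σ : Fin n → Bool, μw Ψ ε σ * (satCount Ψ σ : ℝ)
      = (Ψ.map (margin Ψ ε)).sum := by
    have hpt : ∀ σ : Fin n → Bool, μw Ψ ε σ * (satCount Ψ σ : ℝ)
        = μw Ψ ε σ * (Ψ.map (fun C => if C.eval σ then (1:ℝ) else 0)).sum := fun σ => by
      rw [satCount_real]
    rw [Finset.sum_congr rfl fun σ _ => hpt σ,
      sum_mul_listsum (μw Ψ ε) Ψ (fun σ C => if C.eval σ then (1:ℝ) else 0)]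
    rfl
  have hE1 : (Ψ.map (margin Ψ ε)).sum ≤ (maxVal Ψ : ℝ) := by
    rw [← hE2]
    calc ∑ σ : Fin n → Bool, μw Ψ ε σ * (satCount Ψ σ : ℝ)
        ≤ ∑ σ : Fin n → Bool, μw Ψ ε σ * (maxVal Ψ : ℝ) :=
          Finset.sum_le_sum fun σ _ =>
            mul_le_mul_of_nonneg_left (hmax σ) (μw_nonneg Ψ hεabs σ)
      _ = (maxVal Ψ : ℝ) := by rw [← Finset.sum_mul, sum_μw, one_mul]
  have hlb : (Ψ.map (lbG ε (sv Ψ))).sum ≤ (Ψ.map (margin Ψ ε)).sum :=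
    List.sum_le_sum fun C _ => lb_le_margin Ψ ε C
  have hval : (Ψ.map (lbG ε (sv Ψ))).sum
      = (numOne Ψ : ℝ)/2 + (3/4 - ε^2) * (numTwo Ψ : ℝ) + ε * bias Ψ := by
    rw [lbG_sum, sv_sum_eq_bias]
  have harith : (numOne Ψ : ℝ) / 2 + 3 * (numTwo Ψ : ℝ) / 4
        + (bias Ψ) ^ 2 / (4 * (numTwo Ψ : ℝ))
      = (numOne Ψ : ℝ)/2 + (3/4 - ε^2) * (numTwo Ψ : ℝ) + ε * bias Ψ := by
    rw [hεdef]
    field_simp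
    ring
  linarith

/-- Lemma 3.10, part 2: if `m₂ > 0` and `bias(Ψ) ≤ m₂`, then
`val_Ψ ≥ m₁/2 + 3m₂/4 + bias(Ψ)²/(4m₂)`. -/
theorem or_bias_lower_bound_two {n : ℕ} (Ψ : List (OrClause n))
    (hm2 : 0 < numTwo Ψ) (hb : bias Ψ ≤ (numTwo Ψ : ℝ)) :
    (numOne Ψ : ℝ) / 2 + 3 * (numTwo Ψ : ℝ) / 4 + (bias Ψ) ^ 2 / (4 * (numTwo Ψ : ℝ))
      ≤ (maxVal Ψ : ℝ) := by
  exact or_bias_lower_bound_two_aux Ψ hm2 hb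
end

section
/- Let ε ∈ (0, 0.01) and δ = ε/4. Let Ψ be a Max-2OR instance with m_1 1-clauses and m_2 2-clauses, and let B be a real number with (1−δ)·bias(Ψ) ≤ B ≤ (1+δ)·bias(Ψ). Define v = (1−δ)²·(2m_1 + 3m_2 + B²/m_2)/4 if B ≤ (1−δ)·m_2 (with B²/m_2 interpreted as 0 when m_2 = 0), and v = (1−δ)·(m_1 + m_2 + B)/2 otherwise. Then v ≤ val_Ψ and v ≥ (√2/2 − ε)·val_Ψ. (Correctness analysis of Algorithm 3 in Theorem 3.8, the (√2/2 − ε)-approximation for Max-2OR.) -/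
namespace Max2ORAux
open Finset

variable {n : ℕ}

/-- weight of clause `C` toward literal `(v,b)`: 2 for 1-clauses, 1 per literal for 2-clauses -/
noncomputable def wtc (v : Fin n) (b : Bool) : OrClause n → ℝ
  | .one i b' => if i = v ∧ b' = b then 2 else 0
  | .two i bi j bj _ => (if i = v ∧ bi = b then 1 else 0) + (if j = v ∧ bj = b then 1 else 0)

noncomputable def clEval (g : Fin n → Bool → ℝ) : OrClause n → ℝ
  | .one i b => 2 * g i b
  | .two i bi j bj _ => g i bi + g j bj

lemma sum_ind (g : Fin n → Bool → ℝ) (i : Fin n) (b : Bool) :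
    ∑ v, (g v true * (if i = v ∧ b = true then (1:ℝ) else 0)
        + g v false * (if i = v ∧ b = false then (1:ℝ) else 0)) = g i b := by
  rw [Finset.sum_eq_single i]
  · cases b <;> simp
  · intro v _ hv
    have : ¬ (i = v) := fun h => hv h.symm
    simp [this]
  · simp

lemma sum_wtc (g : Fin n → Bool → ℝ) (C : OrClause n) :
    ∑ v, (g v true * wtc v true C + g v false * wtc v false C) = clEval g C := by
  cases C with
  | one i b =>
      simp only [clEval]
      calc ∑ v, (g v true * wtc v true (OrClause.one i b)
              + g v false * wtc v false (OrClause.one i b))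
          = ∑ v, 2 * ((g v true * if i = v ∧ b = true then (1:ℝ) else 0)
              + g v false * if i = v ∧ b = false then (1:ℝ) else 0) :=
            Finset.sum_congr rfl fun v _ => by simp only [wtc]; split_ifs <;> ring
        _ = 2 * g i b := by rw [← Finset.mul_sum, sum_ind]
  | two i bi j bj hij =>
      simp only [clEval]
      rw [← sum_ind g i bi, ← sum_ind g j bj, ← Finset.sum_add_distrib]
      exact Finset.sum_congr rfl fun v _ => by simp only [wtc]; split_ifs <;> ring

lemma sum_map_add {α : Type*} (l : List α) (f g : α → ℝ) :
    (l.map fun c => f c + g c).sum = (l.map f).sum + (l.map g).sum := by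
  induction l with
  | nil => simp
  | cons C l ih => simp [ih]; ring

lemma sum_map_sigma {α β : Type*} (s : Finset β) (l : List α) (F : β → α → ℝ) :
    (l.map fun c => ∑ x ∈ s, F x c).sum = ∑ x ∈ s, (l.map (F x)).sum := by
  induction l with
  | nil => simp
  | cons C l ih => simp [ih, Finset.sum_add_distrib]

lemma countP_cast {α : Type*} (l : List α) (pr : α → Bool) :
    ((l.countP pr : ℕ) : ℝ) = (l.map fun c => if pr c then (1:ℝ) else 0).sum := by
  induction l with
  | nil => simp
  | cons C l ih => by_cases h : pr C <;> simp [List.countP_cons, h, ih] <;> ring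

lemma cnt_cast (Ψ : List (OrClause n)) (v : Fin n) (b : Bool) :
    (Ψ.map (wtc v b)).sum = 2 * (cnt1 Ψ v b : ℝ) + (cnt2 Ψ v b : ℝ) := by
  induction Ψ with
  | nil => simp [cnt1, cnt2]
  | cons C l ih =>
      simp only [cnt1, cnt2, List.map_cons, List.sum_cons] at ih ⊢
      push_cast
      cases C with
      | one i b' => simp only [wtc]; split_ifs <;> push_cast [ih] <;> ring
      | two i bi j bj hij => simp only [wtc]; split_ifs <;> push_cast [ih] <;> ring

lemma map_clEval (Ψ : List (OrClause n)) (g : Fin n → Bool → ℝ) :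
    (Ψ.map (clEval g)).sum
      = ∑ v, (g v true * (Ψ.map (wtc v true)).sum + g v false * (Ψ.map (wtc v false)).sum) := by
  have : ∀ v : Fin n, g v true * (Ψ.map (wtc v true)).sum + g v false * (Ψ.map (wtc v false)).sum
      = (Ψ.map fun C => g v true * wtc v true C + g v false * wtc v false C).sum := by
    intro v
    rw [sum_map_add, List.sum_map_mul_left, List.sum_map_mul_left]
  rw [Finset.sum_congr rfl fun v _ => this v, ← sum_map_sigma]
  exact congrArg _ (List.map_congr_left fun C _ => (sum_wtc g C).symm)

lemma bias_eq (Ψ : List (OrClause n)) :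
    bias Ψ = (1/2) * ∑ v, |(Ψ.map (wtc v true)).sum - (Ψ.map (wtc v false)).sum| := by
  unfold bias
  congr 1
  refine Finset.sum_congr rfl fun v _ => ?_
  rw [cnt_cast, cnt_cast]
  congr 1
  ring

end Max2ORAux
namespace Max2ORAux
open Finset

variable {n : ℕ}

noncomputable def indSat (σ : Fin n → Bool) (C : OrClause n) : ℝ :=
  if C.eval σ = true then 1 else 0

lemma satCount_cast (Ψ : List (OrClause n)) (σ : Fin n → Bool) :
    ((satCount Ψ σ : ℕ) : ℝ) = (Ψ.map (indSat σ)).sum := by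
  rw [satCount, countP_cast]; rfl

lemma numOne_cast (Ψ : List (OrClause n)) :
    ((numOne Ψ : ℕ) : ℝ) = (Ψ.map fun C => if C.isOne then (1:ℝ) else 0).sum := by
  rw [numOne, countP_cast]

lemma numTwo_cast (Ψ : List (OrClause n)) :
    ((numTwo Ψ : ℕ) : ℝ) = (Ψ.map fun C => if C.isOne then (0:ℝ) else 1).sum := by
  rw [numTwo, countP_cast]
  exact congrArg _ (List.map_congr_left fun C _ => by cases C <;> rfl)

lemma len_cast (Ψ : List (OrClause n)) :
    (numOne Ψ : ℝ) + (numTwo Ψ : ℝ) = (Ψ.length : ℝ) := by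
  have h0 : Ψ.countP (fun C => !C.isOne)
      = Ψ.countP (fun a => decide ¬(OrClause.isOne a = true)) := by
    apply List.countP_congr; intro a _; simp
  have : Ψ.length = _ := List.length_eq_countP_add_countP OrClause.isOne
  rw [numOne, numTwo, h0]
  norm_cast
  omega

/-- Σ_v (P v + N v) = 2(m₁+m₂) -/
lemma sum_PN (Ψ : List (OrClause n)) :
    ∑ v, ((Ψ.map (wtc v true)).sum + (Ψ.map (wtc v false)).sum)
      = 2 * ((numOne Ψ : ℝ) + (numTwo Ψ : ℝ)) := by
  have h := map_clEval Ψ (fun _ _ => 1)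
  simp only [one_mul] at h
  rw [← h, len_cast]
  have : ∀ C : OrClause n, clEval (n := n) (fun _ _ => 1) C = 2 := by
    intro C; cases C <;> simp [clEval] <;> ring
  rw [List.map_congr_left fun C _ => this C]
  simp [List.sum_replicate, mul_comm]

/-- the signs of the per-variable biases -/
noncomputable def sg (Ψ : List (OrClause n)) (v : Fin n) : ℝ :=
  if (Ψ.map (wtc v false)).sum ≤ (Ψ.map (wtc v true)).sum then 1 else -1

lemma sg_abs (Ψ : List (OrClause n)) (v : Fin n) : |sg Ψ v| = 1 := by
  rw [sg]; split_ifs <;> simp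

lemma sum_sgn (Ψ : List (OrClause n)) :
    (Ψ.map (clEval (fun v b => sg Ψ v * (if b then 1 else -1)))).sum = 2 * bias Ψ := by
  rw [map_clEval, bias_eq]
  have key : ∀ v : Fin n,
      (sg Ψ v * (if (true : Bool) then (1:ℝ) else -1)) * (Ψ.map (wtc v true)).sum
      + (sg Ψ v * (if (false : Bool) then (1:ℝ) else -1)) * (Ψ.map (wtc v false)).sum
      = |(Ψ.map (wtc v true)).sum - (Ψ.map (wtc v false)).sum| := by
    intro v
    simp only [if_true, Bool.false_eq_true, if_false]
    unfold sg
    split_ifs with h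
    · rw [abs_of_nonneg (by linarith)]; ring
    · rw [abs_of_neg (by linarith)]; ring
  rw [Finset.sum_congr rfl (fun v _ => key v)]
  ring

/-- indicator function of an assignment -/
noncomputable def gA (σ : Fin n → Bool) (v : Fin n) (b : Bool) : ℝ := if σ v = b then 1 else 0

lemma clEval_gA_le (σ : Fin n → Bool) (C : OrClause n) :
    clEval (gA σ) C ≤ 2 * indSat σ C + (if C.isOne then 0 else 1) := by
  cases C with
  | one i b =>
      simp only [clEval, indSat, OrClause.eval, OrClause.isOne, gA]
      by_cases h : σ i = b <;> simp [h] <;> norm_num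
  | two i bi j bj hij =>
      simp only [clEval, indSat, OrClause.eval, OrClause.isOne, gA]
      by_cases h1 : σ i = bi <;> by_cases h2 : σ j = bj <;> simp [h1, h2] <;> norm_num

lemma two_indSat_le (σ : Fin n → Bool) (C : OrClause n) :
    2 * indSat σ C ≤ clEval (gA σ) C + (if C.isOne then 0 else 1) := by
  cases C with
  | one i b =>
      simp only [clEval, indSat, OrClause.eval, OrClause.isOne, gA]
      by_cases h : σ i = b <;> simp [h] <;> norm_num
  | two i bi j bj hij =>
      simp only [clEval, indSat, OrClause.eval, OrClause.isOne, gA]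
      by_cases h1 : σ i = bi <;> by_cases h2 : σ j = bj <;> simp [h1, h2] <;> norm_num

lemma clEval_gA_le_two_indSat (σ : Fin n → Bool) (C : OrClause n) :
    clEval (gA σ) C ≤ 2 * indSat σ C := by
  cases C with
  | one i b =>
      simp only [clEval, indSat, OrClause.eval, OrClause.isOne, gA]
      by_cases h : σ i = b <;> simp [h] <;> norm_num
  | two i bi j bj hij =>
      simp only [clEval, indSat, OrClause.eval, OrClause.isOne, gA]
      by_cases h1 : σ i = bi <;> by_cases h2 : σ j = bj <;> simp [h1, h2] <;> norm_num

lemma max_formula (a b : ℝ) : max a b = (a + b + |a - b|)/2 := by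
  rcases le_total a b with h | h
  · rw [max_eq_right h, abs_of_nonpos (by linarith)]; ring
  · rw [max_eq_left h, abs_of_nonneg (by linarith)]; ring

/-- Σ_v max(P,N) = m₁ + m₂ + bias -/
lemma sum_max (Ψ : List (OrClause n)) :
    ∑ v, max ((Ψ.map (wtc v true)).sum) ((Ψ.map (wtc v false)).sum)
      = (numOne Ψ : ℝ) + (numTwo Ψ : ℝ) + bias Ψ := by
  have h1 := sum_PN Ψ
  have h2 := bias_eq Ψ
  calc ∑ v, max ((Ψ.map (wtc v true)).sum) ((Ψ.map (wtc v false)).sum)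
      = ∑ v, (((Ψ.map (wtc v true)).sum + (Ψ.map (wtc v false)).sum)
          + |(Ψ.map (wtc v true)).sum - (Ψ.map (wtc v false)).sum|)/2 :=
        Finset.sum_congr rfl fun v _ => max_formula _ _
    _ = ((∑ v, ((Ψ.map (wtc v true)).sum + (Ψ.map (wtc v false)).sum))
        + (∑ v, |(Ψ.map (wtc v true)).sum - (Ψ.map (wtc v false)).sum|))/2 := by
        rw [← Finset.sum_div, Finset.sum_add_distrib]
    _ = (numOne Ψ : ℝ) + (numTwo Ψ : ℝ) + bias Ψ := by
        rw [h1, show (∑ v, |(Ψ.map (wtc v true)).sum - (Ψ.map (wtc v false)).sum|)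
            = 2 * bias Ψ by rw [h2]; ring]
        ring

lemma bias_nonneg (Ψ : List (OrClause n)) : 0 ≤ bias Ψ := by
  rw [bias]
  have : (0:ℝ) ≤ ∑ v : Fin n, |2 * (cnt1 Ψ v true : ℝ) + (cnt2 Ψ v true : ℝ)
      - 2 * (cnt1 Ψ v false : ℝ) - (cnt2 Ψ v false : ℝ)| :=
    Finset.sum_nonneg fun v _ => abs_nonneg _
  linarith

/-- F1 : maxVal ≤ m₁ + m₂ -/
lemma F1 (Ψ : List (OrClause n)) : (maxVal Ψ : ℝ) ≤ (numOne Ψ : ℝ) + (numTwo Ψ : ℝ) := by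
  rw [len_cast]
  have : maxVal Ψ ≤ Ψ.length := Finset.sup_le fun σ _ => List.countP_le_length
  exact_mod_cast this

lemma exists_max (Ψ : List (OrClause n)) : ∃ σ : Fin n → Bool, maxVal Ψ = satCount Ψ σ := by
  obtain ⟨σ, -, h⟩ := Finset.exists_mem_eq_sup (univ : Finset (Fin n → Bool))
    (univ_nonempty) (satCount Ψ)
  exact ⟨σ, h⟩

lemma le_maxVal (Ψ : List (OrClause n)) (σ : Fin n → Bool) : satCount Ψ σ ≤ maxVal Ψ :=
  Finset.le_sup (Finset.mem_univ σ)

lemma W_le (Ψ : List (OrClause n)) (σ : Fin n → Bool) :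
    (Ψ.map (clEval (gA σ))).sum ≤ (numOne Ψ : ℝ) + (numTwo Ψ : ℝ) + bias Ψ := by
  rw [map_clEval, ← sum_max]
  refine Finset.sum_le_sum fun v _ => ?_
  rcases h : σ v with _ | _
  · simp only [gA, h]
    simpa using le_max_right ((Ψ.map (wtc v true)).sum) ((Ψ.map (wtc v false)).sum)
  · simp only [gA, h]
    simpa using le_max_left ((Ψ.map (wtc v true)).sum) ((Ψ.map (wtc v false)).sum)

/-- F2 : 2·maxVal ≤ m₁ + 2m₂ + bias -/
lemma F2 (Ψ : List (OrClause n)) :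
    2 * (maxVal Ψ : ℝ) ≤ (numOne Ψ : ℝ) + 2 * (numTwo Ψ : ℝ) + bias Ψ := by
  obtain ⟨σ, hσ⟩ := exists_max Ψ
  have h1 : 2 * (maxVal Ψ : ℝ) = (Ψ.map fun C => 2 * indSat σ C).sum := by
    rw [hσ, satCount_cast, ← List.sum_map_mul_left]
  have h2 : (Ψ.map fun C => 2 * indSat σ C).sum
      ≤ (Ψ.map fun C => clEval (gA σ) C + (if C.isOne then 0 else 1)).sum :=
    List.sum_le_sum fun C _ => two_indSat_le σ C
  have h3 : (Ψ.map fun C => clEval (gA σ) C + (if C.isOne then 0 else 1)).sum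
      = (Ψ.map (clEval (gA σ))).sum + (numTwo Ψ : ℝ) := by
    rw [sum_map_add, numTwo_cast]
  have h4 := W_le Ψ σ
  linarith

/-- F3 : m₁ + m₂ + bias ≤ 2·maxVal -/
lemma F3 (Ψ : List (OrClause n)) :
    (numOne Ψ : ℝ) + (numTwo Ψ : ℝ) + bias Ψ ≤ 2 * (maxVal Ψ : ℝ) := by
  set σ : Fin n → Bool := fun v => decide ((Ψ.map (wtc v false)).sum ≤ (Ψ.map (wtc v true)).sum)
    with hσdef
  have hW : (Ψ.map (clEval (gA σ))).sum = (numOne Ψ : ℝ) + (numTwo Ψ : ℝ) + bias Ψ := by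
    rw [map_clEval, ← sum_max]
    refine Finset.sum_congr rfl fun v _ => ?_
    by_cases h : (Ψ.map (wtc v false)).sum ≤ (Ψ.map (wtc v true)).sum
    · have hσv : σ v = true := by simp [hσdef, h]
      rw [max_eq_left h]; simp [gA, hσv]
    · have hσv : σ v = false := by simp [hσdef, h]
      rw [max_eq_right (by linarith [lt_of_not_ge h])]; simp [gA, hσv]
  have h1 : (Ψ.map (clEval (gA σ))).sum ≤ (Ψ.map fun C => 2 * indSat σ C).sum :=
    List.sum_le_sum fun C _ => clEval_gA_le_two_indSat σ C
  have h2 : (Ψ.map fun C => 2 * indSat σ C).sum = 2 * (satCount Ψ σ : ℝ) := by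
    rw [satCount_cast, ← List.sum_map_mul_left]
  have h3 : (satCount Ψ σ : ℝ) ≤ (maxVal Ψ : ℝ) := by exact_mod_cast le_maxVal Ψ σ
  linarith

end Max2ORAux
namespace Max2ORAux
open Finset

variable {n : ℕ}

lemma sum_prod_eq (f : Fin n → Bool → ℝ) :
    ∑ σ : Fin n → Bool, ∏ v, f v (σ v) = ∏ v, (f v true + f v false) := by
  rw [← Fintype.piFinset_univ, ← Finset.prod_univ_sum]
  simp

/-- marginal of one coordinate -/
lemma marg1 (p : Fin n → Bool → ℝ) (hp : ∀ v, p v true + p v false = 1) (i : Fin n) (b : Bool) :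
    ∑ σ : Fin n → Bool, (∏ v, p v (σ v)) * (if σ i = b then 1 else 0) = p i b := by
  set f : Fin n → Bool → ℝ := fun v x =>
    if v = i then (if x = b then p v x else 0) else p v x with hf
  have key : ∀ σ : Fin n → Bool, (∏ v, p v (σ v)) * (if σ i = b then 1 else 0)
      = ∏ v, f v (σ v) := by
    intro σ
    by_cases h : σ i = b
    · rw [if_pos h, mul_one]
      refine Finset.prod_congr rfl fun v _ => ?_
      by_cases hv : v = i
      · subst hv; simp [hf, h]
      · simp [hf, hv]
    · rw [if_neg h, mul_zero]
      refine (Finset.prod_eq_zero (Finset.mem_univ i) ?_).symm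
      simp [hf, h]
  rw [Finset.sum_congr rfl fun σ _ => key σ, sum_prod_eq]
  rw [Finset.prod_eq_single i]
  · cases b <;> simp [hf]
  · intro v _ hv
    simp [hf, hv, hp v]
  · simp

/-- marginal of two coordinates -/
lemma marg2 (p : Fin n → Bool → ℝ) (hp : ∀ v, p v true + p v false = 1)
    (i j : Fin n) (hij : i ≠ j) (bi bj : Bool) :
    ∑ σ : Fin n → Bool,
      (∏ v, p v (σ v)) * ((if σ i = bi then 1 else 0) * (if σ j = bj then 1 else 0))
      = p i bi * p j bj := by
  set f : Fin n → Bool → ℝ := fun v x =>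
    if v = i then (if x = bi then p v x else 0)
    else if v = j then (if x = bj then p v x else 0) else p v x with hf
  have key : ∀ σ : Fin n → Bool,
      (∏ v, p v (σ v)) * ((if σ i = bi then 1 else 0) * (if σ j = bj then 1 else 0))
      = ∏ v, f v (σ v) := by
    intro σ
    by_cases h1 : σ i = bi
    · by_cases h2 : σ j = bj
      · rw [if_pos h1, if_pos h2, mul_one, mul_one]
        refine Finset.prod_congr rfl fun v _ => ?_
        by_cases hvi : v = i
        · subst hvi; simp [hf, h1]
        · by_cases hvj : v = j
          · subst hvj; simp [hf, hvi, h2]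
          · simp [hf, hvi, hvj]
      · rw [if_neg h2, mul_zero, mul_zero]
        refine (Finset.prod_eq_zero (Finset.mem_univ j) ?_).symm
        simp [hf, (Ne.symm hij), h2]
    · rw [if_neg h1, zero_mul, mul_zero]
      refine (Finset.prod_eq_zero (Finset.mem_univ i) ?_).symm
      simp [hf, h1]
  rw [Finset.sum_congr rfl fun σ _ => key σ, sum_prod_eq]
  have hFi : f i true + f i false = p i bi := by cases bi <;> simp [hf]
  have hFj : f j true + f j false = p j bj := by cases bj <;> simp [hf, Ne.symm hij]
  have hother : ∀ v, v ≠ i → v ≠ j → f v true + f v false = 1 := by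
    intro v hvi hvj; simp [hf, hvi, hvj, hp v]
  rw [← Finset.mul_prod_erase _ _ (Finset.mem_univ i),
      ← Finset.mul_prod_erase _ _ (Finset.mem_erase.2 ⟨Ne.symm hij, Finset.mem_univ j⟩)]
  rw [hFi, hFj]
  rw [Finset.prod_eq_one fun v hv => ?_]
  · ring
  · rcases Finset.mem_erase.1 hv with ⟨hvj, hv2⟩
    rcases Finset.mem_erase.1 hv2 with ⟨hvi, -⟩
    exact hother v hvi hvj

lemma sum_w_eq_one (p : Fin n → Bool → ℝ) (hp : ∀ v, p v true + p v false = 1) :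
    ∑ σ : Fin n → Bool, ∏ v, p v (σ v) = 1 := by
  rw [sum_prod_eq]
  exact Finset.prod_eq_one fun v _ => hp v

/-- expected satisfaction of a clause -/
noncomputable def qC (p : Fin n → Bool → ℝ) : OrClause n → ℝ
  | .one i b => p i b
  | .two i bi j bj _ => p i bi + p j bj - p i bi * p j bj

lemma exp_indSat (p : Fin n → Bool → ℝ) (hp : ∀ v, p v true + p v false = 1)
    (C : OrClause n) :
    ∑ σ : Fin n → Bool, (∏ v, p v (σ v)) * indSat σ C = qC p C := by
  cases C with
  | one i b =>
      have := marg1 p hp i b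
      simp only [qC]
      rw [← this]
      refine Finset.sum_congr rfl fun σ _ => ?_
      congr 1
      simp only [indSat, OrClause.eval]
      by_cases h : σ i = b <;> simp [h]
  | two i bi j bj hij =>
      have key : ∀ σ : Fin n → Bool, indSat σ (OrClause.two i bi j bj hij)
          = (if σ i = bi then (1:ℝ) else 0) + (if σ j = bj then (1:ℝ) else 0)
            - (if σ i = bi then (1:ℝ) else 0) * (if σ j = bj then (1:ℝ) else 0) := by
        intro σ
        simp only [indSat, OrClause.eval]
        by_cases h1 : σ i = bi <;> by_cases h2 : σ j = bj <;> simp [h1, h2]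
      calc ∑ σ : Fin n → Bool, (∏ v, p v (σ v)) * indSat σ (OrClause.two i bi j bj hij)
          = ∑ σ : Fin n → Bool, ((∏ v, p v (σ v)) * (if σ i = bi then 1 else 0)
            + (∏ v, p v (σ v)) * (if σ j = bj then 1 else 0)
            - (∏ v, p v (σ v)) * ((if σ i = bi then 1 else 0) * (if σ j = bj then 1 else 0))) := by
            refine Finset.sum_congr rfl fun σ _ => ?_
            rw [key σ]; ring
        _ = p i bi + p j bj - p i bi * p j bj := by
            rw [Finset.sum_sub_distrib, Finset.sum_add_distrib,
              marg1 p hp i bi, marg1 p hp j bj, marg2 p hp i j hij bi bj]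
        _ = qC p (OrClause.two i bi j bj hij) := rfl

/-- swap: expected satCount equals sum of clause expectations -/
lemma exp_satCount (p : Fin n → Bool → ℝ) (hp : ∀ v, p v true + p v false = 1)
    (Ψ : List (OrClause n)) :
    ∑ σ : Fin n → Bool, (∏ v, p v (σ v)) * (satCount Ψ σ : ℝ) = (Ψ.map (qC p)).sum := by
  have h : ∀ σ : Fin n → Bool, (∏ v, p v (σ v)) * (satCount Ψ σ : ℝ)
      = (Ψ.map fun C => (∏ v, p v (σ v)) * indSat σ C).sum := by
    intro σ
    rw [satCount_cast, List.sum_map_mul_left]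
  rw [Finset.sum_congr rfl fun σ _ => h σ]
  rw [show (fun σ : Fin n → Bool => (Ψ.map fun C => (∏ v, p v (σ v)) * indSat σ C).sum)
      = fun σ : Fin n → Bool => (Ψ.map fun C => (fun x c => (∏ v, p v (x v)) * indSat x c) σ C).sum
      from rfl]
  rw [← sum_map_sigma (univ : Finset (Fin n → Bool)) Ψ
      (fun σ C => (∏ v, p v (σ v)) * indSat σ C)]
  exact congrArg _ (List.map_congr_left fun C _ => exp_indSat p hp C)

end Max2ORAux
namespace Max2ORAux
open Finset

variable {n : ℕ}

lemma abs_e (b : Bool) : |(if b then (1:ℝ) else -1)| = 1 := by cases b <;> simp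

/-- F4 : if bias ≤ m₂ and m₂ ≠ 0, then m₁/2 + 3m₂/4 + bias²/(4m₂) ≤ maxVal -/
lemma F4 (Ψ : List (OrClause n)) (hbm : bias Ψ ≤ (numTwo Ψ : ℝ)) (hm2 : (numTwo Ψ : ℝ) ≠ 0) :
    (numOne Ψ : ℝ)/2 + 3*(numTwo Ψ : ℝ)/4 + (bias Ψ)^2/(4*(numTwo Ψ : ℝ))
      ≤ (maxVal Ψ : ℝ) := by
  have hm2pos : (0:ℝ) < (numTwo Ψ : ℝ) := lt_of_le_of_ne (Nat.cast_nonneg _) (Ne.symm hm2)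
  have hb0 : 0 ≤ bias Ψ := bias_nonneg Ψ
  set m2 : ℝ := (numTwo Ψ : ℝ) with hm2def
  set t : ℝ := bias Ψ / (2*m2) with ht
  have ht0 : 0 ≤ t := div_nonneg hb0 (by linarith)
  have ht12 : t ≤ 1/2 := by
    rw [ht, div_le_iff₀ (by linarith)]; linarith
  set p : Fin n → Bool → ℝ := fun v x => 1/2 + t * sg Ψ v * (if x then 1 else -1) with hp
  have hp1 : ∀ v, p v true + p v false = 1 := by intro v; simp [hp]; ring
  have hsg_abs : ∀ v, |sg Ψ v| = 1 := sg_abs Ψ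
  have hppos : ∀ v x, 0 ≤ p v x := by
    intro v x
    have : |t * sg Ψ v * (if x then (1:ℝ) else -1)| = t := by
      rw [abs_mul, abs_mul, hsg_abs, abs_e, abs_of_nonneg ht0]; ring
    have h2 := neg_abs_le (t * sg Ψ v * (if x then (1:ℝ) else -1))
    rw [this] at h2
    simp only [hp]
    linarith
  -- expectation is at most maxVal
  have hub : ∑ σ : Fin n → Bool, (∏ v, p v (σ v)) * (satCount Ψ σ : ℝ) ≤ (maxVal Ψ : ℝ) := by
    calc ∑ σ : Fin n → Bool, (∏ v, p v (σ v)) * (satCount Ψ σ : ℝ)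
        ≤ ∑ σ : Fin n → Bool, (∏ v, p v (σ v)) * (maxVal Ψ : ℝ) := by
          refine Finset.sum_le_sum fun σ _ => ?_
          have hw : 0 ≤ ∏ v, p v (σ v) := Finset.prod_nonneg fun v _ => hppos v _
          have : (satCount Ψ σ : ℝ) ≤ (maxVal Ψ : ℝ) := by exact_mod_cast le_maxVal Ψ σ
          exact mul_le_mul_of_nonneg_left this hw
      _ = (maxVal Ψ : ℝ) := by rw [← Finset.sum_mul, sum_w_eq_one p hp1, one_mul]
  rw [exp_satCount p hp1 Ψ] at hub
  -- lower bound the expectation clause by clause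
  set gs : Fin n → Bool → ℝ := fun v b => sg Ψ v * (if b then 1 else -1) with hgs
  have hql : ∀ C ∈ Ψ, (if C.isOne then (1/2 : ℝ) else 3/4 - t^2) + (t/2) * clEval gs C
      ≤ qC p C := by
    intro C _
    cases C with
    | one i b =>
        simp only [qC, clEval, OrClause.isOne, if_pos, hp, hgs]
        ring_nf
        nlinarith [le_refl (0:ℝ)]
    | two i bi j bj hij =>
        simp only [qC, clEval, OrClause.isOne, hp, hgs, Bool.false_eq_true, if_false]
        have habs : |sg Ψ i * (if bi then (1:ℝ) else -1) * (sg Ψ j * (if bj then (1:ℝ) else -1))| = 1 := by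
          rw [abs_mul, abs_mul, abs_mul, hsg_abs, hsg_abs, abs_e, abs_e]; ring
        have hle : sg Ψ i * (if bi then (1:ℝ) else -1) * (sg Ψ j * (if bj then (1:ℝ) else -1)) ≤ 1 := by
          calc _ ≤ |sg Ψ i * (if bi then (1:ℝ) else -1) * (sg Ψ j * (if bj then (1:ℝ) else -1))| := le_abs_self _
          _ = 1 := habs
        nlinarith [sq_nonneg t, mul_le_mul_of_nonneg_left hle (sq_nonneg t)]
  have hsum : ((Ψ.map fun C => (if C.isOne then (1/2 : ℝ) else 3/4 - t^2)
        + (t/2) * clEval gs C).sum) ≤ (Ψ.map (qC p)).sum :=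
    List.sum_le_sum hql
  have hsplit : ((Ψ.map fun C => (if C.isOne then (1/2 : ℝ) else 3/4 - t^2)
        + (t/2) * clEval gs C).sum)
      = (numOne Ψ : ℝ)/2 + (3/4 - t^2) * m2 + (t/2) * (2 * bias Ψ) := by
    rw [sum_map_add]
    have e1 : (Ψ.map fun C => (if C.isOne then (1/2 : ℝ) else 3/4 - t^2)).sum
        = (1/2) * (numOne Ψ : ℝ) + (3/4 - t^2) * m2 := by
      have : ∀ C ∈ Ψ, (if C.isOne then (1/2 : ℝ) else 3/4 - t^2)
          = (1/2) * (if C.isOne then (1:ℝ) else 0) + (3/4 - t^2) * (if C.isOne then (0:ℝ) else 1) := by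
        intro C _; cases C <;> simp [OrClause.isOne]
      rw [List.map_congr_left this, sum_map_add, List.sum_map_mul_left, List.sum_map_mul_left,
        ← numOne_cast, ← numTwo_cast]
    have e2 : (Ψ.map fun C => (t/2) * clEval gs C).sum = (t/2) * (2 * bias Ψ) := by
      rw [List.sum_map_mul_left, sum_sgn]
    rw [e1, e2]; ring
  rw [hsplit] at hsum
  have hfinal : (numOne Ψ : ℝ)/2 + 3*m2/4 + (bias Ψ)^2/(4*m2)
      = (numOne Ψ : ℝ)/2 + (3/4 - t^2) * m2 + (t/2) * (2 * bias Ψ) := by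
    rw [ht]
    field_simp
    ring
  rw [hfinal]
  linarith

end Max2ORAux
namespace Max2ORAux

set_option maxHeartbeats 1000000 in
lemma core_ineq (m1 m2 b V s : ℝ) (hm1 : 0 ≤ m1) (hm2p : 0 < m2) (hb : 0 ≤ b)
    (hF1 : V ≤ m1+m2) (hF2 : 2*V ≤ m1+2*m2+b)
    (hs2 : s^2 = 2) (hs0 : 0 ≤ s) (hs1 : 1 ≤ s) (hs3 : s ≤ 1.415) :
    2*s*V*m2 ≤ 2*m1*m2 + 3*m2^2 + b^2 := by
  have hs2m : s^2*m2^2 = 2*m2^2 := by rw [hs2]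
  rcases le_total b m1 with hbm1 | hbm1
  · have e1 : s*m2*(2*V) ≤ s*m2*(m1+2*m2+b) :=
      mul_le_mul_of_nonneg_left hF2 (mul_nonneg hs0 hm2p.le)
    nlinarith [e1, hs2m, sq_nonneg ((s-1)*m2 - b),
      mul_nonneg (mul_nonneg (show (0:ℝ) ≤ 2-s by nlinarith) hm2p.le) (sub_nonneg.2 hbm1)]
  · have e1 : s*m2*V ≤ s*m2*(m1+m2) :=
      mul_le_mul_of_nonneg_left hF1 (mul_nonneg hs0 hm2p.le)
    nlinarith [e1, hs2m, sq_nonneg ((s-1)*m2 - b),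
      mul_nonneg (mul_nonneg (show (0:ℝ) ≤ 2*s-2 by nlinarith) hm2p.le) (sub_nonneg.2 hbm1)]

set_option maxHeartbeats 1000000 in
lemma aux_h2 (delta b B : ℝ) (hd0 : 0 < delta) (hd1 : delta ≤ 1/400) (hb : 0 ≤ b)
    (hB0 : 0 ≤ B) (hB2 : B ≤ (1+delta)*b) : (1-delta)^2*B^2 ≤ b^2 := by
  have h1 : B*B ≤ ((1+delta)*b)*((1+delta)*b) := mul_self_le_mul_self hB0 hB2
  have h1b : (1-delta)^2*(B*B) ≤ (1-delta)^2*(((1+delta)*b)*((1+delta)*b)) :=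
    mul_le_mul_of_nonneg_left h1 (sq_nonneg _)
  nlinarith [h1b, mul_nonneg (sq_nonneg (delta*b)) (show (0:ℝ) ≤ 2-delta^2 by nlinarith)]

set_option maxHeartbeats 1000000 in
lemma aux_h4 (delta eps b B : ℝ) (hd0 : 0 < delta) (hd1 : delta ≤ 1/400) (hed : eps = 4*delta)
    (hb : 0 ≤ b) (hB1 : (1-delta)*b ≤ B) : (1-eps)*b^2 ≤ (1-delta)^2*B^2 := by
  have hsq : (1-delta)^2*b^2 ≤ B^2 := by
    nlinarith [mul_self_le_mul_self (mul_nonneg (show (0:ℝ) ≤ 1-delta by linarith) hb) hB1]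
  have h5 := mul_le_mul_of_nonneg_left hsq (sq_nonneg (1-delta))
  nlinarith [h5, mul_nonneg (sq_nonneg (delta*b)) (show (0:ℝ) ≤ 6-4*delta+delta^2 by nlinarith)]

set_option maxHeartbeats 1000000 in
lemma final_arith (m1 m2 b V B ε δ v : ℝ)
    (hm1 : 0 ≤ m1) (hm2 : 0 ≤ m2) (hb : 0 ≤ b)
    (hε : 0 < ε) (hε' : ε ≤ 1/100) (hδ : δ = ε/4)
    (hB1 : (1-δ)*b ≤ B) (hB2 : B ≤ (1+δ)*b)
    (hF1 : V ≤ m1 + m2)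
    (hF2 : 2*V ≤ m1 + 2*m2 + b)
    (hF3 : m1 + m2 + b ≤ 2*V)
    (hF4 : b ≤ m2 → m2 ≠ 0 → m1/2 + 3*m2/4 + b^2/(4*m2) ≤ V)
    (hv : v = if B ≤ (1-δ)*m2 then (1-δ)^2*(2*m1+3*m2+B^2/m2)/4 else (1-δ)*(m1+m2+B)/2) :
    v ≤ V ∧ (Real.sqrt 2/2 - ε)*V ≤ v := by
  set s := Real.sqrt 2 with hsdef
  have hs2 : s^2 = 2 := Real.sq_sqrt (by norm_num)
  have hs0 : 0 ≤ s := Real.sqrt_nonneg 2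
  have hs1 : 1 ≤ s := by nlinarith
  have hs3 : s ≤ 1.415 := by nlinarith
  have hδ0 : 0 < δ := by rw [hδ]; linarith
  have hδ1 : δ ≤ 1/400 := by rw [hδ]; linarith
  have hεδ : ε = 4*δ := by rw [hδ]; ring
  have hV0 : 0 ≤ V := by linarith
  by_cases hc : B ≤ (1-δ)*m2
  · rw [hv, if_pos hc]
    have hB0 : 0 ≤ B := le_trans (mul_nonneg (by linarith) hb) hB1
    by_cases hm20 : m2 = 0
    · subst hm20
      have hBz : B = 0 := le_antisymm (by linarith) hB0
      have hbz : b = 0 := by nlinarith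
      have hval : (1-δ)^2*(2*m1+3*0+B^2/0)/4 = (1-δ)^2*(m1/2) := by
        rw [hBz]; norm_num; ring
      rw [hval]
      have hVub : V ≤ m1/2 := by linarith
      have hVlb : m1/2 ≤ V := by linarith
      constructor
      · nlinarith [mul_nonneg hδ0.le (mul_nonneg hδ0.le hm1), mul_nonneg hδ0.le hm1]
      · have hse : (0:ℝ) ≤ s/2-ε := by nlinarith
        have h1 : (s/2-ε)*V ≤ (s/2-ε)*(m1/2) :=
          mul_le_mul_of_nonneg_left hVub hse
        have h2a : s/2-ε ≤ (1-δ)^2 := by nlinarith [mul_nonneg hδ0.le hδ0.le]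
        have h2 : (s/2-ε)*(m1/2) ≤ (1-δ)^2*(m1/2) :=
          mul_le_mul_of_nonneg_right h2a (by linarith)
        linarith
    · have hm2p : (0:ℝ) < m2 := lt_of_le_of_ne hm2 (Ne.symm hm20)
      have hbm : b ≤ m2 := by nlinarith
      have hK := hF4 hbm hm20
      set Z : ℝ := b^2/(4*m2) with hZ
      set X : ℝ := B^2/m2 with hX
      have hZm : m2*Z = b^2/4 := by rw [hZ]; field_simp
      have hXm : m2*X = B^2 := by rw [hX]; field_simp
      have hX0 : 0 ≤ X := div_nonneg (sq_nonneg B) hm2p.le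
      have hZ0 : 0 ≤ Z := div_nonneg (sq_nonneg b) (by linarith)
      have hd1 : (1-δ)^2 ≤ 1 := by nlinarith
      have hd2 : (1-δ)^2*((2*m1+3*m2)/4) ≤ (2*m1+3*m2)/4 := by
        have := mul_le_mul_of_nonneg_right hd1 (show (0:ℝ) ≤ (2*m1+3*m2)/4 by linarith)
        linarith
      have expand : (1-δ)^2*(2*m1+3*m2+X)/4
          = (1-δ)^2*((2*m1+3*m2)/4) + ((1-δ)^2*X)/4 := by ring
      constructor
      · have h2 : (1-δ)^2*B^2 ≤ b^2 := aux_h2 δ b B hδ0 hδ1 hb hB0 hB2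
        have h3 : (1-δ)^2*X ≤ 4*Z := by
          have h3a : ((1-δ)^2*X)*m2 ≤ (4*Z)*m2 := by nlinarith [h2, hZm, hXm]
          exact le_of_mul_le_mul_right h3a hm2p
        rw [expand]
        linarith
      · have h4 : (1-ε)*b^2 ≤ (1-δ)^2*B^2 := aux_h4 δ ε b B hδ0 hδ1 hεδ hb hB1
        have h6 : (1-ε)*(4*Z) ≤ (1-δ)^2*X := by
          have h6a : ((1-ε)*(4*Z))*m2 ≤ ((1-δ)^2*X)*m2 := by nlinarith [h4, hZm, hXm]
          exact le_of_mul_le_mul_right h6a hm2p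
        have hcore := core_ineq m1 m2 b V s hm1 hm2p hb hF1 hF2 hs2 hs0 hs1 hs3
        have hcore2 : (s/2)*V ≤ m1/2 + 3*m2/4 + Z := by
          have h9 : (s/2*V)*m2 ≤ (m1/2 + 3*m2/4 + Z)*m2 := by nlinarith [hcore, hZm]
          exact le_of_mul_le_mul_right h9 hm2p
        have h7 : ε*(m1/2 + 3*m2/4 + Z) ≤ ε*V := mul_le_mul_of_nonneg_left hK hε.le
        have hc1 : 1-ε ≤ (1-δ)^2 := by nlinarith
        have hc2 : (1-ε)*((2*m1+3*m2)/4) ≤ (1-δ)^2*((2*m1+3*m2)/4) :=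
          mul_le_mul_of_nonneg_right hc1 (by linarith)
        have h8 : (1-ε)*(m1/2 + 3*m2/4 + Z) ≤ (1-δ)^2*(2*m1+3*m2+X)/4 := by
          rw [expand]
          have e0 : (1-ε)*(m1/2 + 3*m2/4 + Z) = (1-ε)*((2*m1+3*m2)/4) + (1-ε)*Z := by ring
          rw [e0]
          linarith
        linarith
  · rw [hv, if_neg hc]
    push_neg at hc
    constructor
    · have h1 : (1-δ)*(m1+m2+B) ≤ (1-δ)*(m1+m2+(1+δ)*b) :=
        mul_le_mul_of_nonneg_left (by linarith) (by linarith)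
      have h2 : (1-δ)*(m1+m2+(1+δ)*b) ≤ m1+m2+b := by
        nlinarith [mul_nonneg (mul_nonneg hδ0.le hδ0.le) hb,
          mul_nonneg hδ0.le (add_nonneg hm1 hm2)]
      linarith
    · have h1 : (1+δ)*((1-ε)*m2) ≤ (1+δ)*b := by
        nlinarith [mul_nonneg (mul_nonneg hδ0.le hε.le) hm2, mul_nonneg hε.le hm2,
          mul_nonneg hδ0.le hm2]
      have hbe : (1-ε)*m2 ≤ b := le_of_mul_le_mul_left h1 (by linarith)
      have hmain : 3*V ≤ 2*(m1+m2+b) + ε*m2 := by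
        rcases le_total b m1 with h | h
        · linarith
        · linarith
      have hm2V : m2 ≤ 2*V := by linarith
      have h3 : ε*m2 ≤ ε*(2*V) := mul_le_mul_of_nonneg_left hm2V hε.le
      have h4 : (3 - 2*ε)*V ≤ 2*(m1+m2+b) := by linarith
      have h5 : (1-ε)*(m1+m2+b) ≤ (1-δ)*(m1+m2+B) := by
        have h5a : (1-δ)*((1-δ)*b) ≤ (1-δ)*B := mul_le_mul_of_nonneg_left hB1 (by linarith)
        nlinarith [mul_nonneg hδ0.le (add_nonneg hm1 hm2),
          mul_nonneg (mul_nonneg hδ0.le hδ0.le) hb, mul_nonneg hδ0.le hb]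
      have h6 : (s/2 - ε)*V ≤ (1-ε)*(m1+m2+b)/2 := by
        have h7 : (1-ε)*((3-2*ε)*V) ≤ (1-ε)*(2*(m1+m2+b)) :=
          mul_le_mul_of_nonneg_left h4 (by linarith)
        nlinarith [hV0, mul_nonneg hε.le hV0, mul_nonneg (mul_nonneg hε.le hε.le) hV0]
      linarith

end Max2ORAux
/-- Correctness analysis of Algorithm 3 (Theorem 3.8): the `(√2/2 − ε)`-approximation
for `Max-2OR`. Given `B ∈ (1 ± δ)·bias(Ψ)` with `δ = ε/4`, the output `v` satisfies
`v ≤ val_Ψ` and `v ≥ (√2/2 − ε)·val_Ψ`. (When `m₂ = 0`, `B²/m₂` is `0` by the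
convention that division by zero is zero.) -/
theorem alg_max2or_correct {n : ℕ} (Ψ : List (OrClause n))
    (ε δ B v : ℝ) (hε : ε ∈ Set.Ioo (0 : ℝ) 0.01) (hδ : δ = ε / 4)
    (hB1 : (1 - δ) * bias Ψ ≤ B) (hB2 : B ≤ (1 + δ) * bias Ψ)
    (hv : v = if B ≤ (1 - δ) * (numTwo Ψ : ℝ)
              then (1 - δ) ^ 2 * (2 * (numOne Ψ : ℝ) + 3 * (numTwo Ψ : ℝ)
                      + B ^ 2 / (numTwo Ψ : ℝ)) / 4
              else (1 - δ) * ((numOne Ψ : ℝ) + (numTwo Ψ : ℝ) + B) / 2) :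
    v ≤ (maxVal Ψ : ℝ) ∧ (Real.sqrt 2 / 2 - ε) * (maxVal Ψ : ℝ) ≤ v := by
  have hε0 : 0 < ε := hε.1
  have hε' : ε ≤ 1/100 := by
    have h := hε.2
    norm_num at h
    linarith
  have hF1 := Max2ORAux.F1 Ψ
  have hF2 := Max2ORAux.F2 Ψ
  have hF3 := Max2ORAux.F3 Ψ
  have hb0 := Max2ORAux.bias_nonneg Ψ
  refine Max2ORAux.final_arith (numOne Ψ : ℝ) (numTwo Ψ : ℝ) (bias Ψ) (maxVal Ψ : ℝ) B ε δ v
    (Nat.cast_nonneg _) (Nat.cast_nonneg _) hb0 hε0 hε' hδ hB1 hB2 hF1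
    (by linarith) (by linarith) ?_ hv
  intro hbm hm2
  have := Max2ORAux.F4 Ψ hbm hm2
  linarith
end
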